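/- Fix λ ∈ (0,1) and b ∈ ℝ, and for P > 0 define t(P) = P^λ + b, p(P) = (1/2)·e^{−t(P)} + (1/2)·e^{−t(P)/(2P+1)}, and m(P) = [ e^{−t(P)}·(t(P) + 1) + e^{−t(P)/(2P+1)}·(t(P) + 1 + 2P) ] / (2·p(P)). Then lim_{P→∞} p(P) = 1/2 and lim_{P→∞} m(P)/(1 + 2P) = 1. -/

import Mathlib

open Filter

private lemma aux_ratio (lam b : ℝ) (hlam0 : 0 < lam) (hlam1 : lam < 1) :
    Tendsto (fun P : ℝ => (P ^ lam + b) / (2 * P + 1)) atTop (nhds 0) := by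
  have hlin : Tendsto (fun P : ℝ => 2 * P + 1) atTop atTop :=
    tendsto_atTop_add_const_right _ 1 (tendsto_id.const_mul_atTop (by norm_num))
  have hb : Tendsto (fun P : ℝ => b / (2 * P + 1)) atTop (nhds 0) :=
    tendsto_const_nhds.div_atTop hlin
  have hpow : Tendsto (fun P : ℝ => P ^ lam / (2 * P + 1)) atTop (nhds 0) := by
    have hneg : Tendsto (fun P : ℝ => P ^ (lam - 1)) atTop (nhds 0) := by
      have := tendsto_rpow_neg_atTop (y := 1 - lam) (by linarith)
      refine this.congr' ?_
      filter_upwards [eventually_gt_atTop 0] with P hP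
      rw [show -(1 - lam) = lam - 1 by ring]
    refine squeeze_zero' ?_ ?_ hneg
    · filter_upwards [eventually_gt_atTop 0] with P hP
      positivity
    · filter_upwards [eventually_ge_atTop 1] with P hP
      have hP0 : (0:ℝ) < P := by linarith
      rw [Real.rpow_sub hP0, Real.rpow_one]
      apply div_le_div_of_nonneg_left (by positivity) hP0
      linarith
  have := hpow.add hb
  simp only [add_zero] at this
  refine this.congr ?_
  intro P
  rw [← add_div]

theorem stmt18 (lam b : ℝ) (hlam0 : 0 < lam) (hlam1 : lam < 1) :
    Tendsto (fun P : ℝ =>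
        (1 / 2) * Real.exp (-(P ^ lam + b))
          + (1 / 2) * Real.exp (-(P ^ lam + b) / (2 * P + 1)))
      atTop (nhds (1 / 2)) ∧
    Tendsto (fun P : ℝ =>
        ((Real.exp (-(P ^ lam + b)) * ((P ^ lam + b) + 1)
            + Real.exp (-(P ^ lam + b) / (2 * P + 1)) * ((P ^ lam + b) + 1 + 2 * P))
          / (2 * ((1 / 2) * Real.exp (-(P ^ lam + b))
              + (1 / 2) * Real.exp (-(P ^ lam + b) / (2 * P + 1)))))
          / (1 + 2 * P))
      atTop (nhds 1) := by
  have ht : Tendsto (fun P : ℝ => P ^ lam + b) atTop atTop :=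
    tendsto_atTop_add_const_right _ b (tendsto_rpow_atTop hlam0)
  have hA : Tendsto (fun P : ℝ => Real.exp (-(P ^ lam + b))) atTop (nhds 0) :=
    Real.tendsto_exp_neg_atTop_nhds_zero.comp ht
  have hratio := aux_ratio lam b hlam0 hlam1
  have hB : Tendsto (fun P : ℝ => Real.exp (-(P ^ lam + b) / (2 * P + 1))) atTop (nhds 1) := by
    have : Tendsto (fun P : ℝ => Real.exp (-((P ^ lam + b) / (2 * P + 1)))) atTop
        (nhds (Real.exp (-0))) :=
      (Real.continuous_exp.tendsto _).comp hratio.neg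
    simp only [neg_zero, Real.exp_zero] at this
    refine this.congr fun P => by rw [neg_div]
  constructor
  · have := (hA.const_mul (1/2)).add (hB.const_mul (1/2))
    simpa using this
  · have hlin : Tendsto (fun P : ℝ => 1 + 2 * P) atTop atTop :=
      tendsto_atTop_add_const_left _ 1 (tendsto_id.const_mul_atTop (by norm_num))
    have hAt : Tendsto (fun P : ℝ => Real.exp (-(P ^ lam + b)) * ((P ^ lam + b) + 1))
        atTop (nhds 0) := by
      have base : Tendsto (fun x : ℝ => Real.exp (-x) * (x + 1)) atTop (nhds 0) := by
        have h1 := Real.tendsto_pow_mul_exp_neg_atTop_nhds_zero 1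
        have h2 := Real.tendsto_exp_neg_atTop_nhds_zero
        have := h1.add h2
        simp only [add_zero] at this
        refine this.congr fun x => by ring
      exact base.comp ht
    have hterm1 : Tendsto (fun P : ℝ =>
        Real.exp (-(P ^ lam + b)) * ((P ^ lam + b) + 1) / (1 + 2 * P)) atTop (nhds 0) :=
      hAt.div_atTop hlin
    have hterm2 : Tendsto (fun P : ℝ =>
        Real.exp (-(P ^ lam + b) / (2 * P + 1)) * (1 + (P ^ lam + b) / (2 * P + 1)))
        atTop (nhds 1) := by
      have := hB.mul ((tendsto_const_nhds (x := (1:ℝ))).add hratio)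
      simpa using this
    have hden : Tendsto (fun P : ℝ =>
        Real.exp (-(P ^ lam + b)) + Real.exp (-(P ^ lam + b) / (2 * P + 1)))
        atTop (nhds 1) := by simpa using hA.add hB
    have hfinal := ((hterm1.add hterm2).div hden one_ne_zero)
    simp only [zero_add, div_one] at hfinal
    refine hfinal.congr' ?_
    filter_upwards [eventually_ge_atTop (1:ℝ)] with P hP
    have h1 : (0:ℝ) < 1 + 2 * P := by linarith
    have h2 : (0:ℝ) < 2 * P + 1 := by linarith
    have hApos : 0 < Real.exp (-(P ^ lam + b)) := Real.exp_pos _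
    have hBpos : 0 < Real.exp (-(P ^ lam + b) / (2 * P + 1)) := Real.exp_pos _
    have hsum : Real.exp (-(P ^ lam + b)) + Real.exp (-(P ^ lam + b) / (2 * P + 1)) ≠ 0 := by
      positivity
    rw [Pi.div_apply]
    field_simp
    ring
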